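/- If at least one of G or H is a tree, then the homomorphism γ: Pic(G)×Pic(H)→Pic(Δ) induced by β is surjective, for every choice of triangulated product Δ of G and H. -/

import Mathlib

open scoped Classical
open Finset

section TriangulatedProduct

variable {VG VH : Type*}

/-- The column of the Laplacian matrix of `G` indexed by the vertex `w`:
its entry at `v` is `-deg v` if `v = w`, `1` if `v` is adjacent to `w`, and `0` otherwise. -/
noncomputable def lapCol (G : SimpleGraph VG) [Fintype VG] (w v : VG) : ℤ :=
  if v = w then -(((Finset.univ.filter (fun u => G.Adj v u)).card : ℤ))
  else if G.Adj v w then 1 else 0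

/-- A divisor on a finite graph is principal if it lies in the ℤ-span of the
columns of the Laplacian matrix of the graph. -/
def GraphPrincipal (G : SimpleGraph VG) [Fintype VG] (D : VG → ℤ) : Prop :=
  ∃ f : VG → ℤ, ∀ v, D v = ∑ w, f w * lapCol G w v

/-- A triangulated product of the graphs `G` and `H`: for each square
(an edge `aa'` of `G` together with an edge `bb'` of `H`) exactly one of the two
possible diagonals `{(a,b),(a',b')}`, `{(a,b'),(a',b)}` is chosen.  The structure
records the resulting symmetric "diagonal edge" relation. -/
structure TriProd (G : SimpleGraph VG) (H : SimpleGraph VH) where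
  diag : VG × VH → VG × VH → Prop
  diag_symm : ∀ u v, diag u v → diag v u
  diag_adj : ∀ a a' b b', diag (a, b) (a', b') → G.Adj a a' ∧ H.Adj b b'
  diag_choice : ∀ a a' b b', G.Adj a a' → H.Adj b b' →
    (diag (a, b) (a', b') ∧ ¬ diag (a, b') (a', b)) ∨
    (¬ diag (a, b) (a', b') ∧ diag (a, b') (a', b))

namespace TriProd

variable {G : SimpleGraph VG} {H : SimpleGraph VH}

/-- `u` and `v` form an edge of the triangulated product: a horizontal edge,
a vertical edge, or a diagonal edge. -/
def Adj (T : TriProd G H) (u v : VG × VH) : Prop :=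
  (u.2 = v.2 ∧ G.Adj u.1 v.1) ∨ (u.1 = v.1 ∧ H.Adj u.2 v.2) ∨ T.diag u v

/-- `{u, v, w}` is a triangle (2-face) of the triangulated product. -/
def IsFace (T : TriProd G H) (u v w : VG × VH) : Prop :=
  ∃ a a' b b', T.diag (a, b) (a', b') ∧
    ({u, v, w} : Finset (VG × VH)) = {(a, b), (a', b'), (a', b)}

/-- `{u, v, w}` is a triangle of the triangulated product whose diagonal edge
does not contain the vertex `x`. -/
def IsFaceAvoiding (T : TriProd G H) (u v w x : VG × VH) : Prop :=
  ∃ a a' b b', T.diag (a, b) (a', b') ∧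
    ({u, v, w} : Finset (VG × VH)) = {(a, b), (a', b'), (a', b)} ∧
    x ≠ (a, b) ∧ x ≠ (a', b')

variable [Fintype VG] [Fintype VH]

/-- The structure constant `α(e, x)` for the edge `e = {u, v}` of the
triangulated product and the vertex `x`. -/
noncomputable def alpha (T : TriProd G H) (u v x : VG × VH) : ℤ :=
  if x = u ∨ x = v then
    (if T.diag u v then 1
     else ((Finset.univ.filter (fun w => T.IsFaceAvoiding u v w x)).card : ℤ))
  else 0

/-- The divisor of the function `φ`, evaluated at the edge `{u, v}` of the
triangulated product: the sum of `φ` over the third vertices of the triangles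
containing `{u, v}`, minus `α({u,v},u) φ(u) + α({u,v},v) φ(v)`. -/
noncomputable def Div (T : TriProd G H) (φ : VG × VH → ℤ) (u v : VG × VH) : ℤ :=
  (∑ w ∈ Finset.univ.filter (fun w => T.IsFace u v w), φ w)
    - (T.alpha u v u * φ u + T.alpha u v v * φ v)

/-- A divisor on the triangulated product (a function on edges, encoded as a
function on ordered pairs of vertices) is principal if it agrees with `Div φ`
on every edge, for some `φ`. -/
def Principal (T : TriProd G H) (D : VG × VH → VG × VH → ℤ) : Prop :=
  ∃ φ : VG × VH → ℤ, ∀ u v, T.Adj u v → D u v = T.Div φ u v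

/-- A divisor on the triangulated product is Cartier if near every vertex `x`
it agrees with a principal divisor on all edges containing `x`. -/
def Cartier (T : TriProd G H) (D : VG × VH → VG × VH → ℤ) : Prop :=
  ∀ x : VG × VH, ∃ φ : VG × VH → ℤ,
    ∀ u v, T.Adj u v → (x = u ∨ x = v) → D u v = T.Div φ u v

/-- A divisor is ℚ-Cartier if some nonzero integer multiple of it is Cartier. -/
def QCartier (T : TriProd G H) (D : VG × VH → VG × VH → ℤ) : Prop :=
  ∃ m : ℤ, m ≠ 0 ∧ T.Cartier (fun u v => m * D u v)

/-- The balancing conditions for a divisor `D` on the triangulated product. -/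
def Balanced (T : TriProd G H) (D : VG × VH → VG × VH → ℤ) : Prop :=
  ∀ a : VG, ∀ b : VH,
    (∀ x x' : VG, G.Adj a x → G.Adj a x' →
      (∑ c ∈ Finset.univ.filter (fun c : VH => T.Adj (a, b) (x, c)), D (a, b) (x, c)) =
      (∑ c ∈ Finset.univ.filter (fun c : VH => T.Adj (a, b) (x', c)), D (a, b) (x', c))) ∧
    (∀ y y' : VH, H.Adj b y → H.Adj b y' →
      (∑ c ∈ Finset.univ.filter (fun c : VG => T.Adj (a, b) (c, y)), D (a, b) (c, y)) =
      (∑ c ∈ Finset.univ.filter (fun c : VG => T.Adj (a, b) (c, y')), D (a, b) (c, y')))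

end TriProd

/-- The map `β` sending a pair of divisors on `G` and `H` to a divisor on the
triangulated product: `C(a)` on vertical edges `{(a,b),(a,b')}`, `D(b)` on
horizontal edges `{(a,b),(a',b)}`, and `0` on diagonal edges. -/
noncomputable def beta (C : VG → ℤ) (D : VH → ℤ) (u v : VG × VH) : ℤ :=
  if u.1 = v.1 then C u.1 else if u.2 = v.2 then D u.2 else 0

end TriangulatedProduct

section Development
set_option linter.unusedSectionVars false

open SimpleGraph Finset

variable {VG VH : Type*}

namespace TriProd

variable {G : SimpleGraph VG} {H : SimpleGraph VH}

/-! ### Basic facts about diagonals -/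

lemma diag_symm_iff (T : TriProd G H) (u v : VG × VH) : T.diag u v ↔ T.diag v u :=
  ⟨T.diag_symm u v, T.diag_symm v u⟩

lemma diag_adj' (T : TriProd G H) {a a' : VG} {b b' : VH} (h : T.diag (a, b) (a', b')) :
    G.Adj a a' ∧ H.Adj b b' := T.diag_adj a a' b b' h

lemma not_diag_vert (T : TriProd G H) (a : VG) (b b' : VH) : ¬ T.diag (a, b) (a, b') :=
  fun h => (T.diag_adj' h).1.ne rfl

lemma not_diag_horiz (T : TriProd G H) (a a' : VG) (b : VH) : ¬ T.diag (a, b) (a', b) :=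
  fun h => (T.diag_adj' h).2.ne rfl

/-- Exactly-one-diagonal, convenient form. -/
lemma not_diag_iff (T : TriProd G H) {a a' : VG} {b b' : VH}
    (ha : G.Adj a a') (hb : H.Adj b b') :
    ¬ T.diag (a, b) (a', b') ↔ T.diag (a, b') (a', b) := by
  rcases T.diag_choice a a' b b' ha hb with ⟨h1, h2⟩ | ⟨h1, h2⟩ <;> tauto

lemma diag_not_other (T : TriProd G H) {a a' : VG} {b b' : VH}
    (h : T.diag (a, b) (a', b')) : ¬ T.diag (a, b') (a', b) := by
  have h' := T.diag_adj' h
  rcases T.diag_choice a a' b b' h'.1 h'.2 with ⟨h1, h2⟩ | ⟨h1, h2⟩ <;> tauto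

lemma adj_ne (T : TriProd G H) {u v : VG × VH} (h : T.Adj u v) : u ≠ v := by
  rcases h with ⟨_, h⟩ | ⟨_, h⟩ | h
  · exact fun he => h.ne (congrArg Prod.fst he)
  · exact fun he => h.ne (congrArg Prod.snd he)
  · exact fun he => ((T.diag_adj' (show T.diag (u.1, u.2) (v.1, v.2) from h)).1).ne
      (congrArg Prod.fst he)

/-! ### Decoding triple finset equalities -/

lemma triple_mem {α : Type*} [DecidableEq α] {p q r s t u : α}
    (h : ({p, q, r} : Finset α) = {s, t, u}) :
    (p = s ∨ p = t ∨ p = u) ∧ (q = s ∨ q = t ∨ q = u) ∧ (r = s ∨ r = t ∨ r = u) ∧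
    (s = p ∨ s = q ∨ s = r) ∧ (t = p ∨ t = q ∨ t = r) ∧ (u = p ∨ u = q ∨ u = r) := by
  have hp := Finset.ext_iff.mp h
  refine ⟨?_, ?_, ?_, ?_, ?_, ?_⟩
  · have := (hp p).mp (by simp); simpa using this
  · have := (hp q).mp (by simp); simpa using this
  · have := (hp r).mp (by simp); simpa using this
  · have := (hp s).mpr (by simp); simpa [eq_comm] using this
  · have := (hp t).mpr (by simp); simpa [eq_comm] using this
  · have := (hp u).mpr (by simp); simpa [eq_comm] using this

/-! ### Faces of a diagonal edge -/

section Faces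

variable [Fintype VG] [Fintype VH]

lemma isFace_diag_iff (T : TriProd G H) {a a' : VG} {b b' : VH}
    (hd : T.diag (a, b) (a', b')) (w : VG × VH) :
    T.IsFace (a, b) (a', b') w ↔ (w = (a', b) ∨ w = (a, b')) := by
  have haa' : a ≠ a' := (T.diag_adj' hd).1.ne
  have hbb' : b ≠ b' := (T.diag_adj' hd).2.ne
  constructor
  · rintro ⟨x, x', y, y', hd2, hset⟩
    have hyy' : y ≠ y' := (T.diag_adj' hd2).2.ne
    obtain ⟨h1, h2, -, -, -, h6⟩ := triple_mem hset
    simp only [Prod.mk.injEq] at h1 h2 h6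
    rcases h1 with ⟨rfl, rfl⟩ | ⟨rfl, rfl⟩ | ⟨rfl, rfl⟩
    · rcases h2 with ⟨h, -⟩ | ⟨rfl, rfl⟩ | ⟨-, h⟩
      · exact (haa' h.symm).elim
      · rcases h6 with ⟨h, -⟩ | ⟨-, h⟩ | h
        · exact (haa' h.symm).elim
        · exact (hbb' h).elim
        · exact Or.inl h.symm
      · exact (hbb' h.symm).elim
    · rcases h2 with ⟨rfl, rfl⟩ | ⟨h, -⟩ | ⟨h, -⟩
      · rcases h6 with ⟨-, h⟩ | ⟨h, -⟩ | h
        · exact (hbb' h.symm).elim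
        · exact (haa' h).elim
        · exact Or.inr h.symm
      · exact (haa' h.symm).elim
      · exact (haa' h.symm).elim
    · rcases h2 with ⟨-, h⟩ | ⟨h, -⟩ | ⟨h, -⟩
      · exact (hbb' h.symm).elim
      · exact (haa' h.symm).elim
      · exact (haa' h.symm).elim
  · rintro (rfl | rfl)
    · exact ⟨a, a', b, b', hd, rfl⟩
    · refine ⟨a', a, b', b, T.diag_symm _ _ hd, ?_⟩
      ext t
      simp only [Finset.mem_insert, Finset.mem_singleton]
      tauto

lemma div_diag (T : TriProd G H) {a a' : VG} {b b' : VH}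
    (hd : T.diag (a, b) (a', b')) (φ : VG × VH → ℤ) :
    T.Div φ (a, b) (a', b') = φ (a', b) + φ (a, b') - φ (a, b) - φ (a', b') := by
  have haa' : a ≠ a' := (T.diag_adj' hd).1.ne
  have hfilter : univ.filter (fun w => T.IsFace (a, b) (a', b') w) = {(a', b), (a, b')} := by
    ext w
    simp [isFace_diag_iff T hd w]
  have hne : ((a', b) : VG × VH) ≠ (a, b') := by
    simp [Prod.ext_iff]
    intro h
    exact absurd h.symm haa'
  have ha1 : T.alpha (a, b) (a', b') (a, b) = 1 := by
    simp [TriProd.alpha, hd]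
  have ha2 : T.alpha (a, b) (a', b') (a', b') = 1 := by
    simp [TriProd.alpha, hd]
  unfold TriProd.Div
  rw [hfilter, ha1, ha2, Finset.sum_pair hne]
  ring

lemma isFace_horiz_iff (T : TriProd G H) {a a' : VG} (b : VH)
    (ha : G.Adj a a') (w : VG × VH) :
    T.IsFace (a, b) (a', b) w ↔ ∃ d, H.Adj b d ∧
      ((T.diag (a, b) (a', d) ∧ w = (a', d)) ∨ (T.diag (a, d) (a', b) ∧ w = (a, d))) := by
  have haa' : a ≠ a' := ha.ne
  constructor
  · rintro ⟨x, x', y, y', hd2, hset⟩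
    have hyy' : y ≠ y' := (T.diag_adj' hd2).2.ne
    obtain ⟨h1, h2, -, -, h5, -⟩ := triple_mem hset
    simp only [Prod.mk.injEq] at h1 h2 h5
    rcases h1 with ⟨rfl, rfl⟩ | ⟨rfl, rfl⟩ | ⟨rfl, rfl⟩
    · rcases h2 with ⟨h, -⟩ | ⟨rfl, h⟩ | ⟨rfl, -⟩
      · exact (haa' h.symm).elim
      · exact absurd h hyy'
      · rcases h5 with ⟨h, -⟩ | ⟨-, h⟩ | h
        · exact (haa' h.symm).elim
        · exact (hyy' h.symm).elim
        · exact ⟨y', (T.diag_adj' hd2).2, Or.inl ⟨hd2, h.symm⟩⟩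
    · rcases h2 with ⟨rfl, h⟩ | ⟨h, -⟩ | ⟨h, -⟩
      · exact (hyy' h.symm).elim
      · exact (haa' h.symm).elim
      · exact (haa' h.symm).elim
    · rcases h2 with ⟨rfl, -⟩ | ⟨h, -⟩ | ⟨h, -⟩
      · rcases h5 with ⟨-, h⟩ | ⟨h, -⟩ | h
        · exact (hyy' h.symm).elim
        · exact (haa' h).elim
        · exact ⟨y', (T.diag_adj' hd2).2, Or.inr ⟨T.diag_symm _ _ hd2, h.symm⟩⟩
      · exact (haa' h.symm).elim
      · exact (haa' h.symm).elim
  · rintro ⟨d, hbd, ⟨hd2, rfl⟩ | ⟨hd2, rfl⟩⟩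
    · refine ⟨a, a', b, d, hd2, ?_⟩
      ext t
      simp only [Finset.mem_insert, Finset.mem_singleton]
      tauto
    · refine ⟨a', a, b, d, T.diag_symm _ _ hd2, ?_⟩
      ext t
      simp only [Finset.mem_insert, Finset.mem_singleton]
      tauto

lemma isFaceAvoiding_horiz_fst_iff (T : TriProd G H) {a a' : VG} (b : VH)
    (ha : G.Adj a a') (w : VG × VH) :
    T.IsFaceAvoiding (a, b) (a', b) w (a, b) ↔ ∃ d, H.Adj b d ∧
      (T.diag (a, d) (a', b) ∧ w = (a, d)) := by
  have haa' : a ≠ a' := ha.ne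
  constructor
  · rintro ⟨x, x', y, y', hd2, hset, hne1, hne2⟩
    have hyy' : y ≠ y' := (T.diag_adj' hd2).2.ne
    obtain ⟨h1, h2, -, -, h5, -⟩ := triple_mem hset
    simp only [Prod.mk.injEq] at h1 h2 h5
    rcases h1 with ⟨rfl, rfl⟩ | ⟨rfl, rfl⟩ | ⟨rfl, rfl⟩
    · exact absurd rfl hne1
    · exact absurd rfl hne2
    · rcases h2 with ⟨rfl, -⟩ | ⟨h, -⟩ | ⟨h, -⟩
      · rcases h5 with ⟨-, h⟩ | ⟨h, -⟩ | h
        · exact (hyy' h.symm).elim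
        · exact (haa' h).elim
        · exact ⟨y', (T.diag_adj' hd2).2, T.diag_symm _ _ hd2, h.symm⟩
      · exact (haa' h.symm).elim
      · exact (haa' h.symm).elim
  · rintro ⟨d, hbd, hd2, rfl⟩
    have hbd' : b ≠ d := hbd.ne
    refine ⟨a', a, b, d, T.diag_symm _ _ hd2, ?_, ?_, ?_⟩
    · ext t
      simp only [Finset.mem_insert, Finset.mem_singleton]
      tauto
    · exact fun h => haa' (congrArg Prod.fst h)
    · exact fun h => hbd' (congrArg Prod.snd h)

lemma isFaceAvoiding_horiz_snd_iff (T : TriProd G H) {a a' : VG} (b : VH)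
    (ha : G.Adj a a') (w : VG × VH) :
    T.IsFaceAvoiding (a, b) (a', b) w (a', b) ↔ ∃ d, H.Adj b d ∧
      (T.diag (a, b) (a', d) ∧ w = (a', d)) := by
  have haa' : a ≠ a' := ha.ne
  constructor
  · rintro ⟨x, x', y, y', hd2, hset, hne1, hne2⟩
    have hyy' : y ≠ y' := (T.diag_adj' hd2).2.ne
    obtain ⟨h1, h2, -, -, h5, -⟩ := triple_mem hset
    simp only [Prod.mk.injEq] at h1 h2 h5
    rcases h1 with ⟨rfl, rfl⟩ | ⟨rfl, rfl⟩ | ⟨rfl, rfl⟩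
    · rcases h2 with ⟨h, -⟩ | ⟨rfl, h⟩ | ⟨rfl, -⟩
      · exact (haa' h.symm).elim
      · exact absurd h hyy'
      · rcases h5 with ⟨h, -⟩ | ⟨-, h⟩ | h
        · exact (haa' h.symm).elim
        · exact (hyy' h.symm).elim
        · exact ⟨y', (T.diag_adj' hd2).2, hd2, h.symm⟩
    · rcases h2 with ⟨rfl, h⟩ | ⟨h, -⟩ | ⟨h, -⟩
      · exact (hyy' h.symm).elim
      · exact (haa' h.symm).elim
      · exact (haa' h.symm).elim
    · rcases h2 with ⟨rfl, -⟩ | ⟨h, -⟩ | ⟨h, -⟩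
      · exact absurd rfl hne1
      · exact (haa' h.symm).elim
      · exact (haa' h.symm).elim
  · rintro ⟨d, hbd, hd2, rfl⟩
    have hbd' : b ≠ d := hbd.ne
    refine ⟨a, a', b, d, hd2, ?_, ?_, ?_⟩
    · ext t
      simp only [Finset.mem_insert, Finset.mem_singleton]
      tauto
    · exact fun h => haa' (congrArg Prod.fst h).symm
    · exact fun h => hbd' (congrArg Prod.snd h)

lemma div_horiz (T : TriProd G H) {a a' : VG} (b : VH)
    (ha : G.Adj a a') (φ : VG × VH → ℤ) :
    T.Div φ (a, b) (a', b) = ∑ d ∈ univ.filter (fun d => H.Adj b d),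
      (if T.diag (a, b) (a', d) then φ (a', d) - φ (a', b) else φ (a, d) - φ (a, b)) := by
  classical
  have haa' : a ≠ a' := ha.ne
  set s : Finset VH := univ.filter (fun d => H.Adj b d) with hs
  have hsmem : ∀ d, d ∈ s ↔ H.Adj b d := by
    intro d; simp [hs]
  have hface : univ.filter (fun w => T.IsFace (a, b) (a', b) w)
      = s.image (fun d => if T.diag (a, b) (a', d) then ((a', d) : VG × VH) else (a, d)) := by
    ext w
    simp only [Finset.mem_filter, Finset.mem_univ, true_and, Finset.mem_image,
      isFace_horiz_iff T b ha]
    constructor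
    · rintro ⟨d, hbd, ⟨hd2, rfl⟩ | ⟨hd2, rfl⟩⟩
      · exact ⟨d, (hsmem d).mpr hbd, by rw [if_pos hd2]⟩
      · exact ⟨d, (hsmem d).mpr hbd, by rw [if_neg (fun hc => T.diag_not_other hc hd2)]⟩
    · rintro ⟨d, hd, rfl⟩
      have hbd : H.Adj b d := (hsmem d).mp hd
      by_cases hdg : T.diag (a, b) (a', d)
      · exact ⟨d, hbd, Or.inl ⟨hdg, by rw [if_pos hdg]⟩⟩
      · exact ⟨d, hbd, Or.inr ⟨(T.not_diag_iff ha hbd).mp hdg, by rw [if_neg hdg]⟩⟩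
  have hsnd : ∀ d : VH, (if T.diag (a, b) (a', d) then ((a', d) : VG × VH) else (a, d)).2 = d := by
    intro d; split <;> rfl
  have hinj : ∀ x ∈ s, ∀ y ∈ s,
      (if T.diag (a, b) (a', x) then ((a', x) : VG × VH) else (a, x))
        = (if T.diag (a, b) (a', y) then ((a', y) : VG × VH) else (a, y)) → x = y := by
    intro x _ y _ h
    have := congrArg Prod.snd h
    rwa [hsnd, hsnd] at this
  have hA1 : T.alpha (a, b) (a', b) (a, b)
      = ∑ d ∈ s, (if T.diag (a, d) (a', b) then (1 : ℤ) else 0) := by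
    have h1 : univ.filter (fun w => T.IsFaceAvoiding (a, b) (a', b) w (a, b))
        = (s.filter (fun d => T.diag (a, d) (a', b))).image (fun d => ((a, d) : VG × VH)) := by
      ext w
      simp only [Finset.mem_filter, Finset.mem_univ, true_and, Finset.mem_image,
        isFaceAvoiding_horiz_fst_iff T b ha]
      constructor
      · rintro ⟨d, hbd, hd2, rfl⟩
        exact ⟨d, ⟨(hsmem d).mpr hbd, hd2⟩, rfl⟩
      · rintro ⟨d, ⟨hbd, hd2⟩, rfl⟩
        exact ⟨d, (hsmem d).mp hbd, hd2, rfl⟩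
    have h2 : T.alpha (a, b) (a', b) (a, b)
        = ((univ.filter (fun w => T.IsFaceAvoiding (a, b) (a', b) w (a, b))).card : ℤ) := by
      unfold TriProd.alpha
      rw [if_pos (Or.inl rfl), if_neg (T.not_diag_horiz a a' b)]
    rw [h2, h1, Finset.card_image_of_injective _
      (fun x y h => by simpa using congrArg Prod.snd h)]
    rw [Finset.card_filter]
    push_cast [apply_ite ((↑·) : ℕ → ℤ)]
    rfl
  have hA2 : T.alpha (a, b) (a', b) (a', b)
      = ∑ d ∈ s, (if T.diag (a, b) (a', d) then (1 : ℤ) else 0) := by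
    have h1 : univ.filter (fun w => T.IsFaceAvoiding (a, b) (a', b) w (a', b))
        = (s.filter (fun d => T.diag (a, b) (a', d))).image (fun d => ((a', d) : VG × VH)) := by
      ext w
      simp only [Finset.mem_filter, Finset.mem_univ, true_and, Finset.mem_image,
        isFaceAvoiding_horiz_snd_iff T b ha]
      constructor
      · rintro ⟨d, hbd, hd2, rfl⟩
        exact ⟨d, ⟨(hsmem d).mpr hbd, hd2⟩, rfl⟩
      · rintro ⟨d, ⟨hbd, hd2⟩, rfl⟩
        exact ⟨d, (hsmem d).mp hbd, hd2, rfl⟩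
    have h2 : T.alpha (a, b) (a', b) (a', b)
        = ((univ.filter (fun w => T.IsFaceAvoiding (a, b) (a', b) w (a', b))).card : ℤ) := by
      unfold TriProd.alpha
      rw [if_pos (Or.inr rfl), if_neg (T.not_diag_horiz a a' b)]
    rw [h2, h1, Finset.card_image_of_injective _
      (fun x y h => by simpa using congrArg Prod.snd h)]
    rw [Finset.card_filter]
    push_cast [apply_ite ((↑·) : ℕ → ℤ)]
    rfl
  unfold TriProd.Div
  rw [hface, Finset.sum_image hinj, hA1, hA2, Finset.sum_mul, Finset.sum_mul,
    ← Finset.sum_add_distrib, ← Finset.sum_sub_distrib]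
  refine Finset.sum_congr rfl ?_
  intro d hd
  have hbd : H.Adj b d := (hsmem d).mp hd
  by_cases hdg : T.diag (a, b) (a', d)
  · have hnd : ¬ T.diag (a, d) (a', b) := T.diag_not_other hdg
    rw [if_pos hdg, if_pos hdg, if_pos hdg, if_neg hnd]
    ring
  · have hd2 : T.diag (a, d) (a', b) := (T.not_diag_iff ha hbd).mp hdg
    rw [if_neg hdg, if_neg hdg, if_neg hdg, if_pos hd2]
    ring

end Faces

/-! ### Transpose -/

def transpose (T : TriProd G H) : TriProd H G where
  diag u v := T.diag (u.2, u.1) (v.2, v.1)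
  diag_symm u v h := T.diag_symm _ _ h
  diag_adj b b' a a' h := ⟨(T.diag_adj a a' b b' h).2, (T.diag_adj a a' b b' h).1⟩
  diag_choice b b' a a' hb ha := by
    rcases T.diag_choice a a' b b' ha hb with ⟨h1, h2⟩ | ⟨h1, h2⟩
    · exact Or.inl ⟨h1, fun hc => h2 (T.diag_symm _ _ hc)⟩
    · exact Or.inr ⟨h1, T.diag_symm _ _ h2⟩

lemma transpose_diag (T : TriProd G H) (u v : VH × VG) :
    (T.transpose).diag u v ↔ T.diag u.swap v.swap := by
  cases u; cases v; exact Iff.rfl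

lemma transpose_adj (T : TriProd G H) (u v : VH × VG) :
    (T.transpose).Adj u v ↔ T.Adj u.swap v.swap := by
  unfold TriProd.Adj
  rw [transpose_diag]
  constructor
  · rintro (h | h | h)
    · exact Or.inr (Or.inl h)
    · exact Or.inl h
    · exact Or.inr (Or.inr h)
  · rintro (h | h | h)
    · exact Or.inr (Or.inl h)
    · exact Or.inl h
    · exact Or.inr (Or.inr h)

section TransposeFin

variable [Fintype VG] [Fintype VH]

lemma triple_comm {α : Type*} [DecidableEq α] (u v w : α) :
    ({u, v, w} : Finset α) = {v, u, w} := by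
  ext t
  simp only [Finset.mem_insert, Finset.mem_singleton]
  tauto

lemma swap_triple {α β : Type*} [DecidableEq α] [DecidableEq β] (u v w : α × β) :
    ({u, v, w} : Finset (α × β)).image Prod.swap = {u.swap, v.swap, w.swap} := by
  simp [Finset.image_insert]

lemma transpose_isFace (T : TriProd G H) (u v w : VH × VG) :
    (T.transpose).IsFace u v w ↔ T.IsFace u.swap v.swap w.swap := by
  constructor
  · rintro ⟨x, x', y, y', hd, hset⟩
    refine ⟨y', y, x', x, T.diag_symm _ _ hd, ?_⟩
    have := congrArg (Finset.image Prod.swap) hset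
    rw [swap_triple, swap_triple] at this
    simp only [Prod.swap_prod_mk] at this
    rw [triple_comm (y, x) (y', x')] at this
    simpa using this
  · rintro ⟨p, p', q, q', hd, hset⟩
    refine ⟨q', q, p', p, T.diag_symm _ _ hd, ?_⟩
    have := congrArg (Finset.image Prod.swap) hset
    rw [swap_triple, swap_triple] at this
    simp only [Prod.swap_prod_mk, Prod.swap_swap] at this
    rw [triple_comm (q, p) (q', p')] at this
    simpa using this

lemma transpose_isFaceAvoiding (T : TriProd G H) (u v w x : VH × VG) :
    (T.transpose).IsFaceAvoiding u v w x ↔ T.IsFaceAvoiding u.swap v.swap w.swap x.swap := by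
  constructor
  · rintro ⟨p, p', q, q', hd, hset, hn1, hn2⟩
    refine ⟨q', q, p', p, T.diag_symm _ _ hd, ?_, ?_, ?_⟩
    · have := congrArg (Finset.image Prod.swap) hset
      rw [swap_triple, swap_triple] at this
      simp only [Prod.swap_prod_mk] at this
      rw [triple_comm (q, p) (q', p')] at this
      simpa using this
    · intro h
      exact hn2 (by simpa using congrArg Prod.swap h)
    · intro h
      exact hn1 (by simpa using congrArg Prod.swap h)
  · rintro ⟨p, p', q, q', hd, hset, hn1, hn2⟩
    refine ⟨q', q, p', p, T.diag_symm _ _ hd, ?_, ?_, ?_⟩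
    · have := congrArg (Finset.image Prod.swap) hset
      rw [swap_triple, swap_triple] at this
      simp only [Prod.swap_prod_mk, Prod.swap_swap] at this
      rw [triple_comm (q, p) (q', p')] at this
      simpa using this
    · intro h
      exact hn2 (by simpa using congrArg Prod.swap h)
    · intro h
      exact hn1 (by simpa using congrArg Prod.swap h)

lemma transpose_faceFilter (T : TriProd G H) (u v : VH × VG) :
    (univ.filter (fun w => (T.transpose).IsFace u v w)).image Prod.swap
      = univ.filter (fun w => T.IsFace u.swap v.swap w) := by
  ext w
  simp only [Finset.mem_image, Finset.mem_filter, Finset.mem_univ, true_and]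
  constructor
  · rintro ⟨w₀, hw₀, rfl⟩
    exact (transpose_isFace T u v w₀).mp hw₀
  · intro hw
    exact ⟨w.swap, (transpose_isFace T u v w.swap).mpr (by simpa using hw), by simp⟩

lemma transpose_avoidFilter (T : TriProd G H) (u v x : VH × VG) :
    (univ.filter (fun w => (T.transpose).IsFaceAvoiding u v w x)).image Prod.swap
      = univ.filter (fun w => T.IsFaceAvoiding u.swap v.swap w x.swap) := by
  ext w
  simp only [Finset.mem_image, Finset.mem_filter, Finset.mem_univ, true_and]
  constructor
  · rintro ⟨w₀, hw₀, rfl⟩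
    exact (transpose_isFaceAvoiding T u v w₀ x).mp hw₀
  · intro hw
    exact ⟨w.swap, (transpose_isFaceAvoiding T u v w.swap x).mpr (by simpa using hw), by simp⟩

lemma transpose_alpha (T : TriProd G H) (u v x : VH × VG) :
    (T.transpose).alpha u v x = T.alpha u.swap v.swap x.swap := by
  unfold TriProd.alpha
  have hcond : (x = u ∨ x = v) ↔ (x.swap = u.swap ∨ x.swap = v.swap) := by
    constructor
    · rintro (rfl | rfl)
      · exact Or.inl rfl
      · exact Or.inr rfl
    · rintro (h | h)
      · exact Or.inl (by simpa using congrArg Prod.swap h)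
      · exact Or.inr (by simpa using congrArg Prod.swap h)
  have hdiag : (T.transpose).diag u v ↔ T.diag u.swap v.swap := transpose_diag T u v
  have hcard : (univ.filter (fun w => (T.transpose).IsFaceAvoiding u v w x)).card
      = (univ.filter (fun w => T.IsFaceAvoiding u.swap v.swap w x.swap)).card := by
    rw [← transpose_avoidFilter T u v x,
      Finset.card_image_of_injective _ Prod.swap_injective]
  exact if_congr hcond (if_congr hdiag rfl (by rw [hcard])) rfl

lemma transpose_div (T : TriProd G H) (φ : VH × VG → ℤ) (u v : VH × VG) :
    (T.transpose).Div φ u v = T.Div (fun p => φ p.swap) u.swap v.swap := by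
  unfold TriProd.Div
  have hsum : ∑ w ∈ univ.filter (fun w => (T.transpose).IsFace u v w), φ w
      = ∑ w ∈ univ.filter (fun w => T.IsFace u.swap v.swap w), φ w.swap := by
    rw [← transpose_faceFilter T u v, Finset.sum_image
      (fun x _ y _ h => Prod.swap_injective h)]
    simp
  rw [hsum, transpose_alpha, transpose_alpha]
  simp

lemma transpose_cartier (T : TriProd G H) {P : VG × VH → VG × VH → ℤ} (hP : T.Cartier P) :
    (T.transpose).Cartier (fun u v => P u.swap v.swap) := by
  intro x
  obtain ⟨φ, hφ⟩ := hP x.swap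
  refine ⟨fun p => φ p.swap, ?_⟩
  intro u v hadj hx
  have h1 : T.Adj u.swap v.swap := (transpose_adj T u v).mp hadj
  have h2 : x.swap = u.swap ∨ x.swap = v.swap := by
    rcases hx with rfl | rfl
    · exact Or.inl rfl
    · exact Or.inr rfl
  rw [transpose_div]
  have hfun : (fun p : VG × VH => φ p.swap.swap) = φ := by
    funext p
    simp
  rw [show (fun p : VG × VH => (fun q : VH × VG => φ q.swap) p.swap) = φ from hfun]
  exact hφ u.swap v.swap h1 h2

/-- vertical Div formula, by transposition from the horizontal one. -/
lemma div_vert (T : TriProd G H) (a : VG) {b b' : VH}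
    (hb : H.Adj b b') (φ : VG × VH → ℤ) :
    T.Div φ (a, b) (a, b') = ∑ c ∈ univ.filter (fun c => G.Adj a c),
      (if T.diag (a, b) (c, b') then φ (c, b') - φ (a, b') else φ (c, b) - φ (a, b)) := by
  have h := div_horiz (T.transpose) (a := b) (a' := b') a hb (fun p => φ p.swap)
  rw [transpose_div] at h
  simp only [Prod.swap_prod_mk] at h
  have h2 : T.Div (fun p => φ p.swap.swap) (a, b) (a, b') = T.Div φ (a, b) (a, b') := by
    congr 1
  rw [h2] at h
  rw [h]
  refine Finset.sum_congr rfl ?_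
  intro c _
  rfl

/-! ### Linearity and symmetry of Div -/

lemma div_sub (T : TriProd G H) (φ ψ : VG × VH → ℤ) (u v : VG × VH) :
    T.Div (fun x => φ x - ψ x) u v = T.Div φ u v - T.Div ψ u v := by
  unfold TriProd.Div
  rw [Finset.sum_sub_distrib]
  ring

lemma isFace_symm (T : TriProd G H) (u v w : VG × VH) :
    T.IsFace u v w ↔ T.IsFace v u w := by
  unfold TriProd.IsFace
  rw [triple_comm u v w]

lemma isFaceAvoiding_symm (T : TriProd G H) (u v w x : VG × VH) :
    T.IsFaceAvoiding u v w x ↔ T.IsFaceAvoiding v u w x := by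
  unfold TriProd.IsFaceAvoiding
  rw [triple_comm u v w]

lemma alpha_symm (T : TriProd G H) (u v x : VG × VH) :
    T.alpha u v x = T.alpha v u x := by
  unfold TriProd.alpha
  refine if_congr or_comm (if_congr (T.diag_symm_iff u v) rfl ?_) rfl
  have h : (univ.filter (fun w => T.IsFaceAvoiding u v w x))
      = univ.filter (fun w => T.IsFaceAvoiding v u w x) := by
    ext w
    simp [isFaceAvoiding_symm T u v w x]
  rw [h]

lemma div_symm (T : TriProd G H) (φ : VG × VH → ℤ) (u v : VG × VH) :
    T.Div φ u v = T.Div φ v u := by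
  unfold TriProd.Div
  have h1 : univ.filter (fun w => T.IsFace u v w) = univ.filter (fun w => T.IsFace v u w) := by
    ext w
    simp [isFace_symm T u v w]
  rw [h1, alpha_symm T u v u, alpha_symm T u v v]
  ring

end TransposeFin

end TriProd

/-! ### Constancy along connected graphs -/

lemma const_of_adj_eq {X : Type*} {K : SimpleGraph X} (hc : K.Preconnected)
    {f : X → ℤ} (h : ∀ x y, K.Adj x y → f x = f y) (x y : X) : f x = f y := by
  obtain ⟨w⟩ := hc x y
  induction w with
  | nil => rfl
  | cons hadj _ ih => exact (h _ _ hadj).trans ih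

/-! ### Tree facts -/

section TreeFacts

variable {G : SimpleGraph VG}

lemma isPath_concat {x y z : VG} {p : G.Walk x y} (hp : p.IsPath) (h : G.Adj y z)
    (hz : z ∉ p.support) : (p.concat h).IsPath := by
  rw [← SimpleGraph.Walk.isPath_reverse_iff, SimpleGraph.Walk.reverse_concat,
    SimpleGraph.Walk.cons_isPath_iff]
  exact ⟨hp.reverse, by simpa using hz⟩

lemma dist_lt_of_mem_support {x a : VG} {p : G.Walk x a} (hpl : p.length = G.dist x a)
    {a' : VG} (h : a' ∈ p.support) (hne : a' ≠ a) : G.dist x a' < G.dist x a := by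
  have h1 : G.dist x a' ≤ (p.takeUntil a' h).length := SimpleGraph.dist_le _
  have h2 := congrArg SimpleGraph.Walk.length (p.take_spec h)
  rw [SimpleGraph.Walk.length_append] at h2
  have h3 : (p.dropUntil a' h).length ≠ 0 := by
    intro h0
    exact hne (SimpleGraph.Walk.eq_of_length_eq_zero h0)
  omega

lemma tree_dist_ne (hT : G.IsTree) {a a' : VG} (ha : G.Adj a a') (x : VG) :
    G.dist x a ≠ G.dist x a' := by
  intro heq
  obtain ⟨p, hp, hpl⟩ := hT.isConnected.exists_path_of_dist x a
  have ha'p : a' ∉ p.support := by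
    intro hmem
    have := dist_lt_of_mem_support hpl hmem ha.ne'
    omega
  obtain ⟨p', hp', hpl'⟩ := hT.isConnected.exists_path_of_dist x a'
  have hq : (p.concat ha).IsPath := isPath_concat hp ha ha'p
  have := (hT.existsUnique_path x a').unique hq hp'
  have hlen := congrArg SimpleGraph.Walk.length this
  rw [SimpleGraph.Walk.length_concat] at hlen
  omega

lemma tree_dist_step (hT : G.IsTree) {a a' c : VG} (ha : G.Adj a a') (hc : G.Adj a' c)
    (hne : c ≠ a) (x : VG) (hx : G.dist x c < G.dist x a') : G.dist x a' < G.dist x a := by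
  by_contra hcon
  push_neg at hcon
  have hnea : G.dist x a ≠ G.dist x a' := tree_dist_ne hT ha x
  have htri1 : G.dist x a' ≤ G.dist x a + 1 := by
    have := hT.isConnected.dist_triangle (u := x) (v := a) (w := a')
    rwa [(SimpleGraph.dist_eq_one_iff_adj).mpr ha] at this
  have htri2 : G.dist x a' ≤ G.dist x c + 1 := by
    have := hT.isConnected.dist_triangle (u := x) (v := c) (w := a')
    rwa [(SimpleGraph.dist_eq_one_iff_adj).mpr hc.symm] at this
  -- so dist x a = dist x a' - 1 and dist x c = dist x a' - 1
  have hda : G.dist x a + 1 = G.dist x a' := by omega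
  have hdc : G.dist x c + 1 = G.dist x a' := by omega
  obtain ⟨p1, hp1, hpl1⟩ := hT.isConnected.exists_path_of_dist x a
  obtain ⟨p2, hp2, hpl2⟩ := hT.isConnected.exists_path_of_dist x c
  have h1 : a' ∉ p1.support := by
    intro hmem
    have := dist_lt_of_mem_support hpl1 hmem ha.ne'
    omega
  have h2 : a' ∉ p2.support := by
    intro hmem
    have := dist_lt_of_mem_support hpl2 hmem hc.ne
    omega
  have hq1 : (p1.concat ha).IsPath := isPath_concat hp1 ha h1
  have hq2 : (p2.concat hc.symm).IsPath := isPath_concat hp2 hc.symm h2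
  have heq := (hT.existsUnique_path x a').unique hq1 hq2
  have := congrArg (fun q : G.Walk x a' => q.reverse.support) heq
  simp only [SimpleGraph.Walk.reverse_concat, SimpleGraph.Walk.support_cons] at this
  rw [SimpleGraph.Walk.support_eq_cons p1.reverse,
    SimpleGraph.Walk.support_eq_cons p2.reverse] at this
  have : a = c := by
    injection this with _ h'
    injection h'
  exact hne this.symm

variable [Fintype VG]

/-- the set of vertices strictly closer to `a'` than to `a`. -/
noncomputable def closerSet (G : SimpleGraph VG) (a' a : VG) : Finset VG :=
  univ.filter (fun x => G.dist x a' < G.dist x a)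

lemma closerSet_lt (hT : G.IsTree) {a a' c : VG} (ha : G.Adj a a') (hc : G.Adj a' c)
    (hne : c ≠ a) : (closerSet G c a').card < (closerSet G a' a).card := by
  apply Finset.card_lt_card
  rw [Finset.ssubset_iff_of_subset]
  · refine ⟨a', ?_, ?_⟩
    · simp only [closerSet, Finset.mem_filter, Finset.mem_univ, true_and]
      rw [SimpleGraph.dist_self]
      exact hT.isConnected.pos_dist_of_ne ha.ne'
    · simp only [closerSet, Finset.mem_filter, Finset.mem_univ, true_and]
      rw [SimpleGraph.dist_self]
      omega
  · intro x hx
    simp only [closerSet, Finset.mem_filter, Finset.mem_univ, true_and] at hx ⊢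
    exact tree_dist_step hT ha hc hne x hx

end TreeFacts

/-! ### Summation along walks and tree integration -/

section WalkSum

variable {G : SimpleGraph VG} {M : Type*} [AddCommGroup M]

def walkSum (w : VG → VG → M) : ∀ {x y : VG}, G.Walk x y → M
  | _, _, SimpleGraph.Walk.nil => 0
  | _, _, SimpleGraph.Walk.cons (u := x) (v := z) _ p => w x z + walkSum w p

lemma walkSum_append (w : VG → VG → M) {x y z : VG} (p : G.Walk x y) (q : G.Walk y z) :
    walkSum w (p.append q) = walkSum w p + walkSum w q := by
  induction p with
  | nil => simp [walkSum]
  | cons h' p ih => simp [walkSum, ih, add_assoc]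

lemma walkSum_concat (w : VG → VG → M) {x y z : VG} (p : G.Walk x y) (h : G.Adj y z) :
    walkSum w (p.concat h) = walkSum w p + w y z := by
  rw [SimpleGraph.Walk.concat_eq_append, walkSum_append]
  simp [walkSum]

lemma walkSum_sub (w₁ w₂ : VG → VG → M) {x y : VG} (p : G.Walk x y) :
    walkSum (fun u v => w₁ u v - w₂ u v) p = walkSum w₁ p - walkSum w₂ p := by
  induction p with
  | nil => simp [walkSum]
  | cons h' p ih => simp [walkSum, ih]; abel

/-- Tree integration: summing an antisymmetric edge function along
canonical paths from a root satisfies the expected edge relation. -/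
lemma tree_integrate (hT : G.IsTree) (a₀ : VG)
    (pth : ∀ a, G.Walk a₀ a) (hpth : ∀ a, (pth a).IsPath)
    (huniq : ∀ a (q : G.Walk a₀ a), q.IsPath → q = pth a)
    (w : VG → VG → M) (hw : ∀ u v, G.Adj u v → w u v = - w v u)
    {a a' : VG} (ha : G.Adj a a') :
    walkSum w (pth a') = walkSum w (pth a) + w a a' := by
  classical
  by_cases hmem : a' ∈ (pth a).support
  · set p := pth a with hp
    have ht : (p.takeUntil a' hmem).IsPath := (hpth a).takeUntil hmem
    have hanot : a ∉ (p.takeUntil a' hmem).support := by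
      intro hmem2
      have hnodup : p.support.Nodup := (hpth a).support_nodup
      have hspec := p.take_spec hmem
      rw [← hspec, SimpleGraph.Walk.support_append] at hnodup
      have hdisj := List.disjoint_of_nodup_append hnodup
      have hmem3 : a ∈ (p.dropUntil a' hmem).support.tail := by
        have h4 : a ∈ (p.dropUntil a' hmem).support := SimpleGraph.Walk.end_mem_support _
        rw [SimpleGraph.Walk.support_eq_cons] at h4
        rcases List.mem_cons.mp h4 with h4 | h4
        · exact (ha.ne h4).elim
        · exact h4
      exact hdisj hmem2 hmem3
    have hq : ((p.takeUntil a' hmem).concat ha.symm).IsPath :=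
      isPath_concat ht ha.symm hanot
    have he1 : (p.takeUntil a' hmem).concat ha.symm = pth a := huniq a _ hq
    have he2 : p.takeUntil a' hmem = pth a' := huniq a' _ ht
    have e1 : walkSum w (pth a) = walkSum w (pth a') + w a' a := by
      rw [← he1, walkSum_concat, he2]
    rw [e1, hw a a' ha]
    abel
  · have hq : ((pth a).concat ha).IsPath := isPath_concat (hpth a) ha hmem
    rw [← huniq a' _ hq, walkSum_concat]

end WalkSum

end Development
section MainProof

open SimpleGraph Finset TriProd
set_option linter.unusedSectionVars false
set_option maxHeartbeats 1000000

variable {VG VH : Type*} [Fintype VG] [Fintype VH]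
variable {G : SimpleGraph VG} {H : SimpleGraph VH}

/-- The signed diagonal value of `P` on the square `(a,a') × (b,b')`. -/
noncomputable def mval (T : TriProd G H) (P : VG × VH → VG × VH → ℤ)
    (a a' : VG) (b b' : VH) : ℤ :=
  if T.diag (a, b) (a', b') then -(P (a, b) (a', b')) else P (a, b') (a', b)

lemma mval_antisymm (T : TriProd G H) {P : VG × VH → VG × VH → ℤ}
    (hsymm : ∀ u v, P u v = P v u) {a a' : VG} {b b' : VH}
    (ha : G.Adj a a') (hb : H.Adj b b') :
    mval T P a a' b b' = - mval T P a' a b b' := by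
  unfold mval
  rcases T.diag_choice a a' b b' ha hb with ⟨h1, h2⟩ | ⟨h1, h2⟩
  · have h3 : ¬ T.diag (a', b) (a, b') := fun hc => h2 (T.diag_symm _ _ hc)
    rw [if_pos h1, if_neg h3, hsymm (a', b') (a, b)]
  · have h3 : T.diag (a', b) (a, b') := T.diag_symm _ _ h2
    rw [if_neg h1, if_pos h3, hsymm (a, b') (a', b)]
    ring

/-- The key lemma: over a tree `G`, for every edge `(a,a')` the square values
`mval` in direction `H` admit a potential. Proved by induction on the size of
the branch behind `a'`. -/
lemma key_lemma (hT : G.IsTree) (T : TriProd G H)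
    (P : VG × VH → VG × VH → ℤ) (hsymm : ∀ u v, P u v = P v u) (hP : T.Cartier P) :
    ∀ (n : ℕ) (a a' : VG), G.Adj a a' → (closerSet G a' a).card ≤ n →
    ∃ μ : VH → ℤ, ∀ b b', H.Adj b b' → μ b - μ b' = mval T P a a' b b' := by
  intro n
  induction n with
  | zero =>
    intro a a' ha hcard
    exfalso
    have hmem : a' ∈ closerSet G a' a := by
      simp only [closerSet, Finset.mem_filter, Finset.mem_univ, true_and]
      rw [SimpleGraph.dist_self]
      exact hT.isConnected.pos_dist_of_ne ha.ne'
    have := Finset.card_pos.mpr ⟨a', hmem⟩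
    omega
  | succ n ih =>
    intro a a' ha hcard
    classical
    -- local potentials along the column over a'
    set Φ : VH → (VG × VH → ℤ) := fun b => (hP (a', b)).choose with hΦdef
    have hΦ : ∀ b u v, T.Adj u v → ((a', b) = u ∨ (a', b) = v) →
        P u v = T.Div (Φ b) u v := fun b => (hP (a', b)).choose_spec
    set N : Finset VG := univ.filter (fun c => G.Adj a' c) with hN
    set ν : VH → ℤ := fun b => ∑ c ∈ N, (Φ b (c, b) - Φ b (a', b)) with hν
    have hgrad : ∀ b b', H.Adj b b' →
        ν b - ν b' = ∑ c ∈ N, mval T P c a' b b' := by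
      intro b b' hb
      have hadj : T.Adj (a', b) (a', b') := Or.inr (Or.inl ⟨rfl, hb⟩)
      have e1 : P (a', b) (a', b') = T.Div (Φ b) (a', b) (a', b') :=
        hΦ b _ _ hadj (Or.inl rfl)
      have e2 : P (a', b) (a', b') = T.Div (Φ b') (a', b) (a', b') :=
        hΦ b' _ _ hadj (Or.inr rfl)
      have bridge : T.Div (Φ b) (a', b) (a', b') = T.Div (Φ b') (a', b) (a', b') :=
        e1 ▸ e2
      rw [div_vert T a' hb (Φ b), div_vert T a' hb (Φ b')] at bridge
      have hper : ∀ c ∈ N,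
          (Φ b (c, b) - Φ b (a', b)) - (Φ b' (c, b') - Φ b' (a', b'))
          = ((if T.diag (a', b) (c, b') then Φ b (c, b') - Φ b (a', b')
                else Φ b (c, b) - Φ b (a', b))
            - (if T.diag (a', b) (c, b') then Φ b' (c, b') - Φ b' (a', b')
                else Φ b' (c, b) - Φ b' (a', b)))
            + mval T P c a' b b' := by
        intro c hc
        have hac : G.Adj a' c := by simpa [hN] using hc
        by_cases hdg : T.diag (a', b) (c, b')
        · rw [if_pos hdg, if_pos hdg]
          have hd2 : T.diag (c, b') (a', b) := T.diag_symm _ _ hdg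
          have hnd : ¬ T.diag (c, b) (a', b') := T.diag_not_other hd2
          have hmv : mval T P c a' b b' = P (c, b') (a', b) := by
            unfold mval
            rw [if_neg hnd]
          have e3 : P (c, b') (a', b) = T.Div (Φ b) (c, b') (a', b) :=
            hΦ b _ _ (Or.inr (Or.inr hd2)) (Or.inr rfl)
          rw [div_diag T hd2] at e3
          omega
        · rw [if_neg hdg, if_neg hdg]
          have hd2 : T.diag (a', b') (c, b) := (T.not_diag_iff hac hb).mp hdg
          have hd3 : T.diag (c, b) (a', b') := T.diag_symm _ _ hd2
          have hmv : mval T P c a' b b' = -(P (c, b) (a', b')) := by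
            unfold mval
            rw [if_pos hd3]
          have e3 : P (c, b) (a', b') = T.Div (Φ b') (c, b) (a', b') :=
            hΦ b' _ _ (Or.inr (Or.inr hd3)) (Or.inr rfl)
          rw [div_diag T hd3] at e3
          omega
      calc ν b - ν b'
          = ∑ c ∈ N, ((Φ b (c, b) - Φ b (a', b)) - (Φ b' (c, b') - Φ b' (a', b'))) := by
            rw [hν]
            rw [← Finset.sum_sub_distrib]
        _ = ∑ c ∈ N, (((if T.diag (a', b) (c, b') then Φ b (c, b') - Φ b (a', b')
                else Φ b (c, b) - Φ b (a', b))
            - (if T.diag (a', b) (c, b') then Φ b' (c, b') - Φ b' (a', b')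
                else Φ b' (c, b) - Φ b' (a', b)))
            + mval T P c a' b b') := Finset.sum_congr rfl hper
        _ = ∑ c ∈ N, mval T P c a' b b' := by
            rw [Finset.sum_add_distrib, Finset.sum_sub_distrib]
            rw [bridge]
            ring
    -- inductive potentials for the other neighbours of a'
    have hIH' : ∀ c : VG, ∃ μ : VH → ℤ, (G.Adj a' c ∧ c ≠ a) →
        ∀ b b', H.Adj b b' → μ b - μ b' = mval T P a' c b b' := by
      intro c
      by_cases hcc : G.Adj a' c ∧ c ≠ a
      · have hcard' : (closerSet G c a').card ≤ n := by
          have := closerSet_lt hT ha hcc.1 hcc.2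
          omega
        obtain ⟨μ, hμ⟩ := ih a' c hcc.1 hcard'
        exact ⟨μ, fun _ => hμ⟩
      · exact ⟨0, fun hcc' => absurd hcc' hcc⟩
    choose μf hμf using hIH'
    set sc : Finset VG := univ.filter (fun c => G.Adj a' c ∧ c ≠ a) with hsc
    refine ⟨fun b => ν b + ∑ c ∈ sc, μf c b, ?_⟩
    intro b b' hb
    have hgr := hgrad b b' hb
    have hscN : sc = N.erase a := by
      ext c
      simp only [hsc, hN, Finset.mem_erase, Finset.mem_filter, Finset.mem_univ, true_and]
      tauto
    have haN : a ∈ N := by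
      simp only [hN, Finset.mem_filter, Finset.mem_univ, true_and]
      exact ha.symm
    have hsplit : ∑ c ∈ N, mval T P c a' b b'
        = mval T P a a' b b' + ∑ c ∈ sc, mval T P c a' b b' := by
      rw [hscN]
      exact (Finset.add_sum_erase N (fun c => mval T P c a' b b') haN).symm
    have hterm : ∀ c ∈ sc, μf c b - μf c b' = - mval T P c a' b b' := by
      intro c hc
      have hcc : G.Adj a' c ∧ c ≠ a := by simpa [hsc] using hc
      rw [hμf c hcc b b' hb]
      exact mval_antisymm T hsymm hcc.1 hb
    have hsum : ∑ c ∈ sc, μf c b - ∑ c ∈ sc, μf c b'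
        = - ∑ c ∈ sc, mval T P c a' b b' := by
      rw [← Finset.sum_sub_distrib, ← Finset.sum_neg_distrib]
      exact Finset.sum_congr rfl hterm
    show ν b + (∑ c ∈ sc, μf c b) - (ν b' + (∑ c ∈ sc, μf c b')) = mval T P a a' b b'
    omega

/-- The main theorem in the case where `G` is a tree. -/
theorem main_tree (hG : G.Connected) (hH : H.Connected)
    (hGe : ∃ a a', G.Adj a a') (hHe : ∃ b b', H.Adj b b')
    (T : TriProd G H) (hT : G.IsTree)
    (P : VG × VH → VG × VH → ℤ) (hsymm : ∀ u v, P u v = P v u) (hP : T.Cartier P) :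
    ∃ (C : VG → ℤ) (D : VH → ℤ) (φ : VG × VH → ℤ),
      ∀ u v, T.Adj u v → P u v = beta C D u v + T.Div φ u v := by
  classical
  -- Step A: the potentials along tree edges
  have hg' : ∀ a a' : VG, ∃ g : VH → ℤ, G.Adj a a' →
      ∀ b b', H.Adj b b' → g b - g b' = mval T P a a' b b' := by
    intro a a'
    by_cases ha : G.Adj a a'
    · obtain ⟨μ, hμ⟩ := key_lemma hT T P hsymm hP (closerSet G a' a).card a a' ha le_rfl
      exact ⟨μ, fun _ => hμ⟩
    · exact ⟨0, fun h => absurd h ha⟩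
  choose g hgspec using hg'
  obtain ⟨a₀, a₁, ha01⟩ := hGe
  have hpaths : ∀ a, ∃ p : G.Walk a₀ a, p.IsPath ∧ ∀ q : G.Walk a₀ a, q.IsPath → q = p := by
    intro a
    obtain ⟨p, hp1, hp2⟩ := hT.existsUnique_path a₀ a
    exact ⟨p, hp1, fun q hq => hp2 q hq⟩
  choose pth hpth huniq using hpaths
  set ψ : VG → VH → ℤ := fun a => walkSum g (pth a) with hψdef
  have hM : ∀ a a', G.Adj a a' → ∀ b b', H.Adj b b' →
      (ψ a b - ψ a b') - (ψ a' b - ψ a' b') = - mval T P a a' b b' := by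
    intro a a' ha b b' hb
    have hpoint : ∀ {x y : VG} (p : G.Walk x y), walkSum g p b - walkSum g p b'
        = walkSum (fun u v => g u v b - g u v b') p := by
      intro x y p
      induction p with
      | nil => simp [walkSum]
      | cons h p ih =>
        show (g _ _ + walkSum g p) b - (g _ _ + walkSum g p) b' = _
        simp only [walkSum, Pi.add_apply]
        rw [← ih]
        ring
    have hanti : ∀ u v, G.Adj u v → (fun u v => g u v b - g u v b') u v
        = - ((fun u v => g u v b - g u v b') v u) := by
      intro u v huv
      simp only
      rw [hgspec u v huv b b' hb, hgspec v u huv.symm b b' hb,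
        mval_antisymm T hsymm huv hb]
    have hTI := tree_integrate hT a₀ pth hpth huniq
      (fun u v => g u v b - g u v b') hanti ha
    have h1 : g a a' b - g a a' b' = mval T P a a' b b' := hgspec a a' ha b b' hb
    have h2 := hpoint (pth a)
    have h3 := hpoint (pth a')
    show (walkSum g (pth a) b - walkSum g (pth a) b')
        - (walkSum g (pth a') b - walkSum g (pth a') b') = - mval T P a a' b b'
    omega
  set φ1 : VG × VH → ℤ := fun x => - ψ x.1 x.2 with hφ1def
  have hdiagP : ∀ u v, T.diag u v → P u v = T.Div φ1 u v := by
    rintro ⟨a, b⟩ ⟨a', b'⟩ hd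
    have hab := T.diag_adj' hd
    have hM' := hM a a' hab.1 b b' hab.2
    rw [div_diag T hd φ1]
    have hmv : mval T P a a' b b' = -(P (a, b) (a', b')) := by
      unfold mval
      rw [if_pos hd]
    show P (a, b) (a', b') = - ψ a' b + - ψ a b' - - ψ a b - - ψ a' b'
    omega
  -- Step B
  set Q : VG × VH → VG × VH → ℤ := fun u v => P u v - T.Div φ1 u v with hQdef
  have hQsym : ∀ u v, Q u v = Q v u := by
    intro u v
    simp only [hQdef]
    rw [hsymm u v, div_symm T φ1 u v]
  have hQdiag : ∀ u v, T.diag u v → Q u v = 0 := by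
    intro u v hd
    simp only [hQdef]
    rw [hdiagP u v hd]
    ring
  have hQpot : ∀ x : VG × VH, ∃ ψx : VG × VH → ℤ,
      ∀ u v, T.Adj u v → (x = u ∨ x = v) → Q u v = T.Div ψx u v := by
    intro x
    obtain ⟨φx, hφx⟩ := hP x
    refine ⟨fun y => φx y - φ1 y, ?_⟩
    intro u v hadj hx
    simp only [hQdef]
    rw [div_sub T φx φ1 u v, hφx u v hadj hx]
  choose Ψ hΨ using hQpot
  have hBV : ∀ a b b', H.Adj b b' → Q (a, b) (a, b')
      = ∑ c ∈ univ.filter (fun c => G.Adj a c), (Ψ (a, b) (c, b) - Ψ (a, b) (a, b)) := by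
    intro a b b' hb
    have hadj : T.Adj (a, b) (a, b') := Or.inr (Or.inl ⟨rfl, hb⟩)
    rw [hΨ (a, b) (a, b) (a, b') hadj (Or.inl rfl), div_vert T a hb]
    refine Finset.sum_congr rfl ?_
    intro c hc
    have hac : G.Adj a c := by simpa using hc
    by_cases hdg : T.diag (a, b) (c, b')
    · rw [if_pos hdg]
      have h0 : Q (a, b) (c, b') = 0 := hQdiag _ _ hdg
      have h1 : Q (a, b) (c, b') = T.Div (Ψ (a, b)) (a, b) (c, b') :=
        hΨ (a, b) (a, b) (c, b') (Or.inr (Or.inr hdg)) (Or.inl rfl)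
      rw [div_diag T hdg] at h1
      omega
    · rw [if_neg hdg]
  have hBH : ∀ a a' b, G.Adj a a' → Q (a, b) (a', b)
      = ∑ d ∈ univ.filter (fun d => H.Adj b d), (Ψ (a, b) (a, d) - Ψ (a, b) (a, b)) := by
    intro a a' b ha
    have hadj : T.Adj (a, b) (a', b) := Or.inl ⟨rfl, ha⟩
    rw [hΨ (a, b) (a, b) (a', b) hadj (Or.inl rfl), div_horiz T b ha]
    refine Finset.sum_congr rfl ?_
    intro d hd
    have hbd : H.Adj b d := by simpa using hd
    by_cases hdg : T.diag (a, b) (a', d)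
    · rw [if_pos hdg]
      have h0 : Q (a, b) (a', d) = 0 := hQdiag _ _ hdg
      have h1 : Q (a, b) (a', d) = T.Div (Ψ (a, b)) (a, b) (a', d) :=
        hΨ (a, b) (a, b) (a', d) (Or.inr (Or.inr hdg)) (Or.inl rfl)
      rw [div_diag T hdg] at h1
      omega
    · rw [if_neg hdg]
  obtain ⟨b₀, b₁, hb01⟩ := hHe
  set C : VG → ℤ := fun a => Q (a, b₀) (a, b₁) with hCdef
  have hCconst : ∀ a b b', H.Adj b b' → Q (a, b) (a, b') = C a := by
    intro a b b' hb
    set fval : VH → ℤ :=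
      fun x => ∑ c ∈ univ.filter (fun c => G.Adj a c), (Ψ (a, x) (c, x) - Ψ (a, x) (a, x))
      with hfval
    have hstep : ∀ x y, H.Adj x y → fval x = fval y := by
      intro x y hxy
      have e1 : Q (a, x) (a, y) = fval x := hBV a x y hxy
      have e2 : Q (a, y) (a, x) = fval y := hBV a y x hxy.symm
      have e3 : Q (a, x) (a, y) = Q (a, y) (a, x) := hQsym _ _
      omega
    have hc := const_of_adj_eq hH.preconnected hstep b b₀
    calc Q (a, b) (a, b') = fval b := hBV a b b' hb
      _ = fval b₀ := hc
      _ = C a := (hBV a b₀ b₁ hb01).symm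
  set D : VH → ℤ := fun b => Q (a₀, b) (a₁, b) with hDdef
  have hDconst : ∀ a a' b, G.Adj a a' → Q (a, b) (a', b) = D b := by
    intro a a' b ha
    set fval : VG → ℤ :=
      fun x => ∑ d ∈ univ.filter (fun d => H.Adj b d), (Ψ (x, b) (x, d) - Ψ (x, b) (x, b))
      with hfval
    have hstep : ∀ x y, G.Adj x y → fval x = fval y := by
      intro x y hxy
      have e1 : Q (x, b) (y, b) = fval x := hBH x y b hxy
      have e2 : Q (y, b) (x, b) = fval y := hBH y x b hxy.symm
      have e3 : Q (x, b) (y, b) = Q (y, b) (x, b) := hQsym _ _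
      omega
    have hc := const_of_adj_eq hG.preconnected hstep a a₀
    calc Q (a, b) (a', b) = fval a := hBH a a' b ha
      _ = fval a₀ := hc
      _ = D b := (hBH a₀ a₁ b ha01).symm
  refine ⟨C, D, φ1, ?_⟩
  rintro ⟨a, b⟩ ⟨a', b'⟩ hadj
  rcases hadj with ⟨h2, h1⟩ | ⟨h1, h2⟩ | hd
  · -- horizontal
    simp only at h1 h2
    subst h2
    have hQ : Q (a, b) (a', b) = D b := hDconst a a' b h1
    have hbeta : beta C D (a, b) (a', b) = D b := by
      show (if a = a' then C a else if b = b then D b else 0) = D b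
      rw [if_neg h1.ne, if_pos rfl]
    rw [hbeta]
    simp only [hQdef] at hQ
    omega
  · -- vertical
    simp only at h1 h2
    subst h1
    have hQ : Q (a, b) (a, b') = C a := hCconst a b b' h2
    have hbeta : beta C D (a, b) (a, b') = C a := by
      show (if a = a then C a else if b = b' then D b else 0) = C a
      rw [if_pos rfl]
    rw [hbeta]
    simp only [hQdef] at hQ
    omega
  · -- diagonal
    have hab := T.diag_adj' hd
    have hbeta : beta C D (a, b) (a', b') = 0 := by
      show (if a = a' then C a else if b = b' then D b else 0) = 0
      rw [if_neg hab.1.ne, if_neg hab.2.ne]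
    rw [hbeta, hdiagP _ _ hd]
    ring

end MainProof

/-- If at least one of `G` or `H` is a tree, then the homomorphism
`γ : Pic(G) × Pic(H) → Pic(Δ)` induced by `β` is surjective: every Cartier divisor `P`
on the triangulated product `Δ` is, up to a principal divisor, of the form `β(C, D)`. -/
theorem gamma_surjective {VG VH : Type*} [Fintype VG] [Fintype VH]
    (G : SimpleGraph VG) (H : SimpleGraph VH)
    (hG : G.Connected) (hH : H.Connected)
    (hGe : ∃ a a', G.Adj a a') (hHe : ∃ b b', H.Adj b b')
    (T : TriProd G H)
    (htree : G.IsTree ∨ H.IsTree)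
    (P : VG × VH → VG × VH → ℤ) (hsymm : ∀ u v, P u v = P v u)
    (hP : T.Cartier P) :
    ∃ (C : VG → ℤ) (D : VH → ℤ) (φ : VG × VH → ℤ),
      ∀ u v, T.Adj u v → P u v = beta C D u v + T.Div φ u v := by
  rcases htree with hT | hT
  · exact main_tree hG hH hGe hHe T hT P hsymm hP
  · obtain ⟨C', D', ψ, hspec⟩ := main_tree (G := H) (H := G) hH hG hHe hGe
      T.transpose hT (fun u v => P u.swap v.swap)
      (fun u v => hsymm u.swap v.swap) (TriProd.transpose_cartier T hP)
    refine ⟨D', C', fun p => ψ p.swap, ?_⟩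
    intro u v hadj
    have h1 : (T.transpose).Adj u.swap v.swap := by
      rw [TriProd.transpose_adj]
      simpa using hadj
    have h2 := hspec u.swap v.swap h1
    rw [TriProd.transpose_div] at h2
    simp only [Prod.swap_swap] at h2
    rw [h2]
    congr 1
    have hne : u ≠ v := T.adj_ne hadj
    show (if u.swap.1 = v.swap.1 then C' u.swap.1 else if u.swap.2 = v.swap.2
        then D' u.swap.2 else 0)
      = (if u.1 = v.1 then D' u.1 else if u.2 = v.2 then C' u.2 else 0)
    simp only [Prod.fst_swap, Prod.snd_swap]
    by_cases e1 : u.1 = v.1 <;> by_cases e2 : u.2 = v.2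
    · exact absurd (Prod.ext e1 e2) hne
    · simp [e1, e2]
    · simp [e1, e2]
    · simp [e1, e2]
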